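/- Cover–Hart lemma: let Ω be a separable metric space, μ a Borel probability measure on Ω, and (X_n) an i.i.d. sequence with law μ. Fix k_n with k_n/n → 0. For x ∈ Ω let r_n(x) be the smallest r ≥ 0 such that the closed ball of radius r around x contains at least k_n of the points X₁,…,X_n. Then almost surely, r_n converges to 0 uniformly on every totally bounded subset of the support of μ. -/

import Mathlib

open MeasureTheory Metric Filter
open scoped ENNReal

/-- The `k`-NN radius of `x` within the sample `X₀(ω), …, X_{n-1}(ω)`: the smallest
`r ≥ 0` such that the closed ball of radius `r` around `x` contains at least `k`
of the sample points. -/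
noncomputable def kNNRadius {Ω α : Type*} [MetricSpace Ω] (X : ℕ → α → Ω)
    (k : ℕ → ℕ) (n : ℕ) (ω : α) (x : Ω) : ℝ :=
  sInf {r : ℝ | 0 ≤ r ∧
    k n ≤ ((Finset.range n).filter fun i => dist (X i ω) x ≤ r).card}

lemma kNNRadius_nonneg {Ω α : Type*} [MetricSpace Ω] (X : ℕ → α → Ω)
    (k : ℕ → ℕ) (n : ℕ) (ω : α) (x : Ω) : 0 ≤ kNNRadius X k n ω x :=
  Real.sInf_nonneg fun _ hr => hr.1

lemma kNNRadius_le {Ω α : Type*} [MetricSpace Ω] {X : ℕ → α → Ω}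
    {k : ℕ → ℕ} {n : ℕ} {ω : α} {x : Ω} {ε : ℝ} (hε : 0 ≤ ε)
    (h : k n ≤ ((Finset.range n).filter fun i => dist (X i ω) x ≤ ε).card) :
    kNNRadius X k n ω x ≤ ε :=
  csInf_le ⟨0, fun _ hr => hr.1⟩ ⟨hε, h⟩

lemma kNNRadius_lipschitz {Ω α : Type*} [MetricSpace Ω] (X : ℕ → α → Ω)
    (k : ℕ → ℕ) (n : ℕ) (ω : α) (x y : Ω) :
    kNNRadius X k n ω y ≤ kNNRadius X k n ω x + dist x y := by
  set Sx := {r : ℝ | 0 ≤ r ∧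
    k n ≤ ((Finset.range n).filter fun i => dist (X i ω) x ≤ r).card} with hSx
  rcases Sx.eq_empty_or_nonempty with h | h
  · have : kNNRadius X k n ω y ≤ 0 := by
      rcases ({r : ℝ | 0 ≤ r ∧
        k n ≤ ((Finset.range n).filter fun i => dist (X i ω) y ≤ r).card}).eq_empty_or_nonempty
        with h' | h'
      · unfold kNNRadius; rw [h']; simp [Real.sInf_empty]
      · exfalso
        rcases h' with ⟨r, hr0, hrk⟩
        have : r + dist y x ∈ Sx := by
          refine ⟨by positivity, le_trans hrk (Finset.card_le_card ?_)⟩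
          intro i hi
          simp only [Finset.mem_filter] at hi ⊢
          exact ⟨hi.1, le_trans (dist_triangle _ y x) (by linarith [hi.2])⟩
        rw [h] at this; exact this
    calc kNNRadius X k n ω y ≤ 0 := this
      _ ≤ kNNRadius X k n ω x + dist x y := by
          have := kNNRadius_nonneg X k n ω x; positivity
  · rw [← sub_le_iff_le_add]
    apply le_csInf h
    intro r hr
    rw [sub_le_iff_le_add]
    apply kNNRadius_le (by have := hr.1; positivity)
    refine le_trans hr.2 (Finset.card_le_card ?_)
    intro i hi
    simp only [Finset.mem_filter] at hi ⊢
    refine ⟨hi.1, le_trans (dist_triangle _ x y) (by linarith [hi.2])⟩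

lemma cover_hart_eps {Ω α : Type*} [MetricSpace Ω]
    [MeasurableSpace Ω] [BorelSpace Ω] [MeasurableSpace α]
    (P : Measure α) [IsProbabilityMeasure P] (μ : Measure Ω) [IsProbabilityMeasure μ]
    (X : ℕ → α → Ω) (hmeas : ∀ i, Measurable (X i))
    (hlaw : ∀ i, P.map (X i) = μ)
    (hindep : ProbabilityTheory.iIndepFun X P)
    (k : ℕ → ℕ) (hk : Tendsto (fun n => (k n : ℝ) / n) atTop (nhds 0))
    (x : Ω) {ε : ℝ} (hε : 0 < ε) (hx : 0 < μ (ball x ε)) :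
    ∀ᵐ ω ∂P, ∀ᶠ n in atTop, kNNRadius X k n ω x ≤ ε := by
  classical
  set g : Ω → ℝ := Set.indicator (ball x ε) (fun _ => (1:ℝ)) with hg
  have hgm : Measurable g := measurable_const.indicator measurableSet_ball
  set Y : ℕ → α → ℝ := fun i ω => g (X i ω) with hY
  have hint : Integrable (Y 0) P := by
    have : Y 0 = Set.indicator ((X 0) ⁻¹' ball x ε) (fun _ => (1:ℝ)) := by
      ext ω
      simp [hY, hg, Set.indicator_apply, Set.mem_preimage]
    rw [this]
    exact (integrable_const (1:ℝ)).indicator ((hmeas 0) measurableSet_ball)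
  have hindep' : Pairwise (Function.onFun (ProbabilityTheory.IndepFun · · P) Y) := fun i j hij =>
    (hindep.indepFun hij).comp hgm hgm
  have hident : ∀ i, ProbabilityTheory.IdentDistrib (Y i) (Y 0) P P := fun i =>
    (ProbabilityTheory.IdentDistrib.comp
      ⟨(hmeas i).aemeasurable, (hmeas 0).aemeasurable, by rw [hlaw i, hlaw 0]⟩ hgm)
  have hmean : (∫ a, Y 0 a ∂P) = (μ (ball x ε)).toReal := by
    rw [show (∫ a, Y 0 a ∂P) = ∫ ω, g (X 0 ω) ∂P from rfl,
      ← integral_map (hmeas 0).aemeasurable hgm.aestronglyMeasurable, hlaw 0, hg,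
      integral_indicator_const _ measurableSet_ball, smul_eq_mul, mul_one, measureReal_def]
  have hp : 0 < (μ (ball x ε)).toReal :=
    ENNReal.toReal_pos hx.ne' (measure_ne_top μ _)
  have hslln := ProbabilityTheory.strong_law_ae_real Y hint hindep' hident
  rw [hmean] at hslln
  filter_upwards [hslln] with ω hω
  have hdiff : Tendsto (fun n : ℕ => (∑ i ∈ Finset.range n, Y i ω) / n - (k n : ℝ) / n)
      atTop (nhds ((μ (ball x ε)).toReal - 0)) := hω.sub hk
  rw [sub_zero] at hdiff
  filter_upwards [hdiff.eventually (eventually_gt_nhds hp), eventually_ge_atTop 1]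
    with n hn hn1
  have hsum : (∑ i ∈ Finset.range n, Y i ω)
      = ((Finset.range n).filter fun i => X i ω ∈ ball x ε).card := by
    rw [← Finset.sum_boole]
    refine Finset.sum_congr rfl fun i _ => ?_
    simp [hY, hg, Set.indicator_apply]
  rw [hsum] at hn
  have hnpos : (0:ℝ) < n := by exact_mod_cast hn1
  have hklt : (k n : ℝ) < ((Finset.range n).filter fun i => X i ω ∈ ball x ε).card := by
    have := sub_pos.mp hn
    rw [div_lt_div_iff₀ hnpos hnpos] at this
    nlinarith
  have hkle : k n ≤ ((Finset.range n).filter fun i => X i ω ∈ ball x ε).card := by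
    exact_mod_cast hklt.le
  refine kNNRadius_le hε.le (le_trans hkle (Finset.card_le_card ?_))
  intro i hi
  simp only [Finset.mem_filter, mem_ball] at hi ⊢
  exact ⟨hi.1, hi.2.le⟩

lemma cover_hart_pointwise {Ω α : Type*} [MetricSpace Ω]
    [MeasurableSpace Ω] [BorelSpace Ω] [MeasurableSpace α]
    (P : Measure α) [IsProbabilityMeasure P] (μ : Measure Ω) [IsProbabilityMeasure μ]
    (X : ℕ → α → Ω) (hmeas : ∀ i, Measurable (X i))
    (hlaw : ∀ i, P.map (X i) = μ)
    (hindep : ProbabilityTheory.iIndepFun X P)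
    (k : ℕ → ℕ) (hk : Tendsto (fun n => (k n : ℝ) / n) atTop (nhds 0))
    (x : Ω) (hx : ∀ ε : ℝ, 0 < ε → 0 < μ (ball x ε)) :
    ∀ᵐ ω ∂P, Tendsto (fun n => kNNRadius X k n ω x) atTop (nhds 0) := by
  have H : ∀ m : ℕ, ∀ᵐ ω ∂P, ∀ᶠ n in atTop, kNNRadius X k n ω x ≤ 1 / ((m:ℝ) + 1) := by
    intro m
    have hpos : (0:ℝ) < 1 / ((m:ℝ) + 1) := by positivity
    exact cover_hart_eps P μ X hmeas hlaw hindep k hk x hpos (hx _ hpos)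
  rw [← ae_all_iff] at H
  filter_upwards [H] with ω hω
  rw [NormedAddCommGroup.tendsto_nhds_zero]
  intro ε hε
  obtain ⟨m, hm⟩ := exists_nat_one_div_lt hε
  filter_upwards [hω m] with n hn
  rw [Real.norm_eq_abs, abs_of_nonneg (kNNRadius_nonneg X k n ω x)]
  linarith

lemma cover_hart_det {Ω α : Type*} [MetricSpace Ω] (X : ℕ → α → Ω)
    (k : ℕ → ℕ) (ω : α) (D : Set Ω)
    (hD : ∀ a ∈ D, Tendsto (fun n => kNNRadius X k n ω a) atTop (nhds 0))
    (K : Set Ω) (hK : TotallyBounded K) (hKD : K ⊆ closure D) :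
    TendstoUniformlyOn (fun n x => kNNRadius X k n ω x) (fun _ => (0 : ℝ)) atTop K := by
  classical
  rw [Metric.tendstoUniformlyOn_iff]
  intro ε hε
  obtain ⟨t, htfin, htcov⟩ := totallyBounded_iff.mp hK (ε/4) (by positivity)
  have choice : ∀ y : Ω, ∃ a : Ω, (K ∩ ball y (ε/4)).Nonempty →
      a ∈ D ∧ ∀ z ∈ K, z ∈ ball y (ε/4) → dist z a < 3*ε/4 := by
    intro y
    by_cases h : (K ∩ ball y (ε/4)).Nonempty
    · obtain ⟨z0, hz0K, hz0b⟩ := h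
      obtain ⟨a, haD, hdz⟩ := Metric.mem_closure_iff.mp (hKD hz0K) (ε/4) (by positivity)
      refine ⟨a, fun _ => ⟨haD, fun z hzK hzb => ?_⟩⟩
      have h1 := dist_triangle z z0 a
      have h2 := dist_triangle z y z0
      have h3 : dist y z0 < ε/4 := by rw [dist_comm]; exact mem_ball.mp hz0b
      have h4 : dist z y < ε/4 := mem_ball.mp hzb
      linarith
    · exact ⟨y, fun hc => absurd hc h⟩
  choose f hf using choice
  set T : Set Ω := {y ∈ t | (K ∩ ball y (ε/4)).Nonempty} with hT
  have hTfin : (f '' T).Finite := (htfin.subset (Set.sep_subset _ _)).image f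
  have hev : ∀ᶠ n in atTop, ∀ a ∈ f '' T, kNNRadius X k n ω a < ε/4 := by
    rw [eventually_all_finite hTfin]
    rintro a ⟨y, hyT, rfl⟩
    have haD : f y ∈ D := (hf y hyT.2).1
    exact (hD _ haD).eventually (eventually_lt_nhds (by positivity))
  filter_upwards [hev] with n hn z hzK
  obtain ⟨y, hyt, hzb⟩ := Set.mem_iUnion₂.mp (htcov hzK)
  have hyT : y ∈ T := ⟨hyt, ⟨z, hzK, hzb⟩⟩
  obtain ⟨haD, hnear⟩ := hf y hyT.2
  have hlip := kNNRadius_lipschitz X k n ω (f y) z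
  have hfa := hn (f y) ⟨y, hyT, rfl⟩
  have hdz := hnear z hzK hzb
  rw [dist_comm (f y) z] at hlip
  rw [Real.dist_eq, abs_sub_comm, sub_zero, abs_of_nonneg (kNNRadius_nonneg X k n ω z)]
  linarith

/-- Cover–Hart lemma: if `(Xₙ)` is an i.i.d. sequence with law `μ` on a separable
metric space, and `kₙ/n → 0`, then almost surely the `kₙ`-NN radii converge to `0`
uniformly on every totally bounded subset of the support of `μ`. -/
theorem cover_hart {Ω α : Type*} [MetricSpace Ω] [TopologicalSpace.SeparableSpace Ω]
    [MeasurableSpace Ω] [BorelSpace Ω] [MeasurableSpace α]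
    (P : Measure α) [IsProbabilityMeasure P] (μ : Measure Ω) [IsProbabilityMeasure μ]
    (X : ℕ → α → Ω) (hmeas : ∀ i, Measurable (X i))
    (hlaw : ∀ i, P.map (X i) = μ)
    (hindep : ProbabilityTheory.iIndepFun X P)
    (k : ℕ → ℕ) (hk : Tendsto (fun n => (k n : ℝ) / n) atTop (nhds 0)) :
    ∀ᵐ ω ∂P, ∀ K : Set Ω, TotallyBounded K →
      K ⊆ {x : Ω | ∀ ε : ℝ, 0 < ε → 0 < μ (ball x ε)} →
      TendstoUniformlyOn (fun n x => kNNRadius X k n ω x) (fun _ => (0 : ℝ)) atTop K := by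
  set S : Set Ω := {x : Ω | ∀ ε : ℝ, 0 < ε → 0 < μ (ball x ε)} with hS
  obtain ⟨D, hDS, hDc, hDd⟩ :=
    (TopologicalSpace.IsSeparable.of_separableSpace S).exists_countable_dense_subset
  have Hae : ∀ᵐ ω ∂P, ∀ a ∈ D, Tendsto (fun n => kNNRadius X k n ω a) atTop (nhds 0) := by
    rw [ae_ball_iff hDc]
    intro a haD
    exact cover_hart_pointwise P μ X hmeas hlaw hindep k hk a (hDS haD)
  filter_upwards [Hae] with ω hω K hKtb hKS
  exact cover_hart_det X k ω D hω K hKtb (hKS.trans hDd)
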